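/- Let h : ℝ_{>0} → ℝ_{≥0} be measurable and such that x ↦ h(r(x)) is a probability density with respect to Lebesgue measure on ℝ^p. If the random vector x has density h(r(x)), then the direction u = x/‖x‖ has density f(u) = c_0 · r(u)^{−p} with respect to the surface measure σ on S^{p-1}, where c_0 = 1 / ∫_{S^{p-1}} r(v)^{−p} dσ(v). That is, the pushforward under x ↦ x/‖x‖ of the measure on 𝒳 with Lebesgue density h ∘ r has density u ↦ c_0 r(u)^{−p} with respect to σ. -/

import Mathlib

open MeasureTheory Metric Set
open scoped ENNReal
noncomputable section


lemma sub_aux' (p : ℕ) (hp : 1 ≤ p) (h : ℝ → ℝ) (hh : Measurable h) (c : ℝ) (hc : 0 < c) :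
    ∫⁻ t in Set.Ioi (0:ℝ), ENNReal.ofReal (t ^ (p-1)) * ENNReal.ofReal (h (c * t)) =
    ENNReal.ofReal (c ^ (-(p:ℝ))) *
      ∫⁻ s in Set.Ioi (0:ℝ), ENNReal.ofReal (s ^ (p-1)) * ENNReal.ofReal (h s) := by
  set Φ : ℝ → ℝ≥0∞ :=
    (Set.Ioi (0:ℝ)).indicator (fun s => ENNReal.ofReal ((c⁻¹ * s) ^ (p-1)) * ENNReal.ofReal (h s))
    with hΦdef
  have hΦ : Measurable Φ :=
    (((measurable_const_mul c⁻¹).pow_const _).ennreal_ofReal.mul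
      hh.ennreal_ofReal).indicator measurableSet_Ioi
  have hmem : ∀ t : ℝ, c * t ∈ Set.Ioi (0:ℝ) ↔ t ∈ Set.Ioi (0:ℝ) := by
    intro t; simp only [mem_Ioi]; exact mul_pos_iff_of_pos_left hc
  have h1 : ∀ t : ℝ, Φ (c * t)
      = (Set.Ioi (0:ℝ)).indicator
          (fun t => ENNReal.ofReal (t ^ (p-1)) * ENNReal.ofReal (h (c * t))) t := by
    intro t
    by_cases ht : t ∈ Set.Ioi (0:ℝ)
    · rw [hΦdef, indicator_of_mem ((hmem t).mpr ht), indicator_of_mem ht,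
        inv_mul_cancel_left₀ hc.ne']
    · rw [hΦdef, indicator_of_notMem (fun hm => ht ((hmem t).mp hm)), indicator_of_notMem ht]
  calc
    ∫⁻ t in Set.Ioi (0:ℝ), ENNReal.ofReal (t ^ (p-1)) * ENNReal.ofReal (h (c * t))
        = ∫⁻ t, Φ (c * t) := by
          rw [← lintegral_indicator measurableSet_Ioi]
          exact (lintegral_congr h1).symm
    _ = ∫⁻ s, Φ s ∂(Measure.map (c * ·) volume) := by
          rw [lintegral_map hΦ (measurable_const_mul c)]
    _ = ENNReal.ofReal c⁻¹ * ∫⁻ s, Φ s := by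
          rw [Real.map_volume_mul_left hc.ne', lintegral_smul_measure,
            abs_of_pos (inv_pos.mpr hc), smul_eq_mul]
    _ = ENNReal.ofReal c⁻¹ * ∫⁻ s in Set.Ioi (0:ℝ),
          ENNReal.ofReal ((c⁻¹ * s) ^ (p-1)) * ENNReal.ofReal (h s) := by
          rw [hΦdef, lintegral_indicator measurableSet_Ioi]
    _ = ENNReal.ofReal (c ^ (-(p:ℝ))) *
          ∫⁻ s in Set.Ioi (0:ℝ), ENNReal.ofReal (s ^ (p-1)) * ENNReal.ofReal (h s) := by
          have : ∀ s : ℝ, ENNReal.ofReal ((c⁻¹ * s) ^ (p-1)) * ENNReal.ofReal (h s)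
              = ENNReal.ofReal (c⁻¹ ^ (p-1)) *
                (ENNReal.ofReal (s ^ (p-1)) * ENNReal.ofReal (h s)) := by
            intro s
            rw [mul_pow, ENNReal.ofReal_mul (by positivity), mul_assoc]
          rw [lintegral_congr this, lintegral_const_mul' _ _ ENNReal.ofReal_ne_top,
            ← mul_assoc, ← ENNReal.ofReal_mul (by positivity)]
          congr 2
          rw [Real.rpow_neg hc.le, Real.rpow_natCast, ← inv_pow]
          rw [← pow_succ']
          congr 1
          omega

lemma direction_density_aux {E : Type*} [NormedAddCommGroup E] [NormedSpace ℝ E]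
    [MeasurableSpace E] [BorelSpace E] [FiniteDimensional ℝ E] [Nontrivial E]
    (μ : Measure E) [μ.IsAddHaarMeasure] [SecondCountableTopology E]
    {p : ℕ} (hp : 2 ≤ p) (hdim : Module.finrank ℝ E = p)
    (r : E → ℝ)
    (hr_cont : ContinuousOn r {x : E | x ≠ 0})
    (hr_pos : ∀ x : E, x ≠ 0 → 0 < r x)
    (hr_equiv : ∀ c : ℝ, 0 < c → ∀ x : E, x ≠ 0 → r (c • x) = c * r x)
    (h : ℝ → ℝ) (hh_meas : Measurable h)
    (hprob : (μ.withDensity fun x => ENNReal.ofReal (h (r x))) univ = 1)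
    (c₀ : ℝ)
    (hc₀ : c₀ = 1 / ∫ v : sphere (0 : E) 1, r (v : E) ^ (-(p : ℝ)) ∂μ.toSphere) :
    Measure.map (fun x : E => ‖x‖⁻¹ • x) (μ.withDensity fun x => ENNReal.ofReal (h (r x)))
      = Measure.map (Subtype.val : sphere (0 : E) 1 → E)
          ((μ.toSphere).withDensity
            fun u => ENNReal.ofReal (c₀ * r (u : E) ^ (-(p : ℝ)))) := by
  set g : E → E := fun x => ‖x‖⁻¹ • x with hgdef
  have hg_meas : Measurable g := measurable_norm.inv.smul measurable_id
  set d : E → ℝ≥0∞ := fun x => ENNReal.ofReal (h (r x)) with hddef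
  set σ : Measure (sphere (0:E) 1) := μ.toSphere with hσdef
  have hsph_ne : ∀ u : sphere (0:E) 1, (u : E) ≠ 0 := fun u => ne_of_mem_sphere u.2 one_ne_zero
  have hr_sph : Continuous fun u : sphere (0:E) 1 => r u :=
    hr_cont.comp_continuous continuous_subtype_val hsph_ne
  have hr_sph_pos : ∀ u : sphere (0:E) 1, 0 < r u := fun u => hr_pos _ (hsph_ne u)
  have hf_cont : Continuous fun u : sphere (0:E) 1 => r u ^ (-(p:ℝ)) :=
    hr_sph.rpow_const fun u => Or.inl (hr_sph_pos u).ne'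
  have hf_meas : Measurable fun u : sphere (0:E) 1 => ENNReal.ofReal (r u ^ (-(p:ℝ))) :=
    hf_cont.measurable.ennreal_ofReal
  have MP : MeasurePreserving (homeomorphUnitSphereProd E)
      (μ.comap Subtype.val) (σ.prod (Measure.volumeIoiPow (p - 1))) := by
    have := μ.measurePreserving_homeomorphUnitSphereProd
    rwa [hdim] at this
  set I : ℝ≥0∞ := ∫⁻ s in Set.Ioi (0:ℝ), ENNReal.ofReal (s ^ (p-1)) * ENNReal.ofReal (h s)
    with hIdef
  have key : ∀ s : Set E, MeasurableSet s →
      (μ.withDensity d) (g ⁻¹' s)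
        = (∫⁻ u in (Subtype.val ⁻¹' s : Set (sphere (0:E) 1)),
            ENNReal.ofReal (r u ^ (-(p:ℝ))) ∂σ) * I := by
    intro s hs
    set G : sphere (0:E) 1 × Set.Ioi (0:ℝ) → ℝ≥0∞ :=
      ((Subtype.val ⁻¹' s : Set (sphere (0:E) 1)) ×ˢ (univ : Set (Set.Ioi (0:ℝ)))).indicator
        (fun y => ENNReal.ofReal (h (r y.1 * y.2.1))) with hGdef
    have hG : Measurable G := by
      apply Measurable.indicator
      · exact (hh_meas.comp
          (((hr_sph.comp continuous_fst).mul
            (continuous_subtype_val.comp continuous_snd)).measurable)).ennreal_ofReal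
      · exact (measurable_subtype_coe hs).prod MeasurableSet.univ
    have step1 : (μ.withDensity d) (g ⁻¹' s) = ∫⁻ x in g ⁻¹' s ∩ {(0:E)}ᶜ, d x ∂μ := by
      rw [withDensity_apply _ (hg_meas hs), ← Measure.restrict_restrict (hg_meas hs),
        restrict_compl_singleton]
    set t : Set ({(0:E)}ᶜ : Set E) := Subtype.val ⁻¹' (g ⁻¹' s) with htdef
    have ht_meas : MeasurableSet t := measurable_subtype_coe (hg_meas hs)
    have himg : (Subtype.val '' t) = g ⁻¹' s ∩ {(0:E)}ᶜ := by
      rw [htdef, Subtype.image_preimage_coe, inter_comm]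
    have step2 : ∫⁻ x in g ⁻¹' s ∩ {(0:E)}ᶜ, d x ∂μ
        = ∫⁻ x in t, d x.1 ∂(μ.comap Subtype.val) := by
      rw [setLIntegral_subtype (measurableSet_singleton (0:E)).compl t (fun x => d x), himg]
    have step3 : ∫⁻ x in t, d x.1 ∂(μ.comap Subtype.val)
        = ∫⁻ y, G y ∂(σ.prod (Measure.volumeIoiPow (p - 1))) := by
      rw [← MP.lintegral_comp hG, ← lintegral_indicator ht_meas]
      apply lintegral_congr
      intro x
      have hx0 : (x : E) ≠ 0 := x.2
      have hnorm_pos : 0 < ‖(x:E)‖ := norm_pos_iff.mpr hx0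
      have hmem : x ∈ t ↔ (homeomorphUnitSphereProd E x) ∈
          ((Subtype.val ⁻¹' s : Set (sphere (0:E) 1)) ×ˢ (univ : Set (Set.Ioi (0:ℝ)))) := by
        simp only [htdef, hgdef, mem_preimage, Set.mem_prod, Set.mem_univ, and_true,
          homeomorphUnitSphereProd_apply_fst_coe]
      have hval : d (x : E)
          = ENNReal.ofReal (h (r ((homeomorphUnitSphereProd E x).1 : E)
              * ((homeomorphUnitSphereProd E x).2 : ℝ))) := by
        simp only [hddef, homeomorphUnitSphereProd_apply_fst_coe,
          homeomorphUnitSphereProd_apply_snd_coe]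
        congr 2
        have hne : (‖(x:E)‖⁻¹ • (x:E)) ≠ 0 :=
          smul_ne_zero (inv_ne_zero hnorm_pos.ne') hx0
        have heq := hr_equiv ‖(x:E)‖ hnorm_pos (‖(x:E)‖⁻¹ • (x:E)) hne
        rw [smul_inv_smul₀ hnorm_pos.ne'] at heq
        rw [heq, mul_comm]
      by_cases hxt : x ∈ t
      · rw [indicator_of_mem hxt, hGdef, indicator_of_mem (hmem.mp hxt)]
        exact hval
      · rw [indicator_of_notMem hxt, hGdef,
          indicator_of_notMem (fun hm => hxt (hmem.mpr hm))]
    have inner : ∀ u : sphere (0:E) 1,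
        ∫⁻ y, G (u, y) ∂(Measure.volumeIoiPow (p - 1))
          = (Subtype.val ⁻¹' s : Set (sphere (0:E) 1)).indicator
              (fun u => ENNReal.ofReal (r u ^ (-(p:ℝ))) * I) u := by
      intro u
      by_cases hu : u ∈ (Subtype.val ⁻¹' s : Set (sphere (0:E) 1))
      · rw [indicator_of_mem hu]
        have hGu : ∀ y : Set.Ioi (0:ℝ), G (u, y) = ENNReal.ofReal (h (r u * y.1)) := by
          intro y
          rw [hGdef, indicator_of_mem (by exact ⟨hu, Set.mem_univ _⟩)]
        have hgm : Measurable fun y : Set.Ioi (0:ℝ) => ENNReal.ofReal (h (r u * (y:ℝ))) :=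
          (hh_meas.comp (measurable_const.mul measurable_subtype_coe)).ennreal_ofReal
        rw [lintegral_congr hGu, Measure.volumeIoiPow,
          lintegral_withDensity_eq_lintegral_mul _
            (measurable_subtype_coe.pow_const _).ennreal_ofReal hgm]
        have hsub : ∫⁻ y : Set.Ioi (0:ℝ),
            ENNReal.ofReal ((y:ℝ) ^ (p-1)) * ENNReal.ofReal (h (r u * (y:ℝ)))
              ∂(Measure.comap Subtype.val volume)
            = ∫⁻ z in Set.Ioi (0:ℝ),
                ENNReal.ofReal (z ^ (p-1)) * ENNReal.ofReal (h (r u * z)) :=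
          lintegral_subtype_comap measurableSet_Ioi
            (fun z => ENNReal.ofReal (z ^ (p-1)) * ENNReal.ofReal (h (r u * z)))
        calc ∫⁻ y : Set.Ioi (0:ℝ),
              ((fun y : Set.Ioi (0:ℝ) => ENNReal.ofReal ((y:ℝ) ^ (p-1)))
                * fun y : Set.Ioi (0:ℝ) => ENNReal.ofReal (h (r u * (y:ℝ)))) y
              ∂(Measure.comap Subtype.val volume)
            = ∫⁻ y : Set.Ioi (0:ℝ),
                ENNReal.ofReal ((y:ℝ) ^ (p-1)) * ENNReal.ofReal (h (r u * (y:ℝ)))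
                ∂(Measure.comap Subtype.val volume) := rfl
          _ = ∫⁻ z in Set.Ioi (0:ℝ),
                ENNReal.ofReal (z ^ (p-1)) * ENNReal.ofReal (h (r u * z)) := hsub
          _ = ENNReal.ofReal (r u ^ (-(p:ℝ))) * I :=
            sub_aux' p (by omega) h hh_meas (r u) (hr_sph_pos u)
      · rw [indicator_of_notMem hu]
        have hGu : ∀ y : Set.Ioi (0:ℝ), G (u, y) = 0 := by
          intro y
          rw [hGdef, indicator_of_notMem (by simp [hu])]
        rw [lintegral_congr hGu, lintegral_zero]
    calc (μ.withDensity d) (g ⁻¹' s)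
        = ∫⁻ y, G y ∂(σ.prod (Measure.volumeIoiPow (p - 1))) := by
          rw [step1, step2, step3]
      _ = ∫⁻ u, ∫⁻ y, G (u, y) ∂(Measure.volumeIoiPow (p - 1)) ∂σ :=
          lintegral_prod _ hG.aemeasurable
      _ = ∫⁻ u, (Subtype.val ⁻¹' s : Set (sphere (0:E) 1)).indicator
            (fun u => ENNReal.ofReal (r u ^ (-(p:ℝ))) * I) u ∂σ :=
          lintegral_congr inner
      _ = ∫⁻ u in (Subtype.val ⁻¹' s : Set (sphere (0:E) 1)),
            ENNReal.ofReal (r u ^ (-(p:ℝ))) * I ∂σ :=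
          lintegral_indicator (measurable_subtype_coe hs) _
      _ = (∫⁻ u in (Subtype.val ⁻¹' s : Set (sphere (0:E) 1)),
            ENNReal.ofReal (r u ^ (-(p:ℝ))) ∂σ) * I :=
          lintegral_mul_const _ hf_meas
  set J : ℝ≥0∞ := ∫⁻ u, ENNReal.ofReal (r u ^ (-(p:ℝ))) ∂σ with hJdef
  have hnorm : J * I = 1 := by
    have h1 := key univ MeasurableSet.univ
    rw [preimage_univ, preimage_univ, Measure.restrict_univ] at h1
    rw [← h1]
    exact hprob
  have hJ0 : J ≠ 0 := by
    intro h0; rw [h0, zero_mul] at hnorm; exact zero_ne_one hnorm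
  have hJtop : J ≠ ⊤ := by
    intro htop
    rw [htop] at hnorm
    rcases eq_or_ne I 0 with hI | hI
    · rw [hI, mul_zero] at hnorm; exact zero_ne_one hnorm
    · rw [ENNReal.top_mul hI] at hnorm; exact (ENNReal.top_ne_one) hnorm
  have hI_eq : I = J⁻¹ := by
    have h2 := congrArg (fun z => J⁻¹ * z) hnorm
    simpa [← mul_assoc, ENNReal.inv_mul_cancel hJ0 hJtop] using h2
  have hint_eq : ∫ v : sphere (0:E) 1, r (v:E) ^ (-(p:ℝ)) ∂σ = J.toReal := by
    rw [hJdef, ← integral_eq_lintegral_of_nonneg_ae]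
    · exact Filter.Eventually.of_forall fun u => (Real.rpow_pos_of_pos (hr_sph_pos u) _).le
    · exact hf_cont.aestronglyMeasurable
  have hJt_pos : 0 < J.toReal := ENNReal.toReal_pos hJ0 hJtop
  have hc₀_pos : 0 < c₀ := by
    rw [hc₀, hint_eq]; positivity
  have hofReal_c₀ : ENNReal.ofReal c₀ = J⁻¹ := by
    rw [hc₀, hint_eq, one_div, ENNReal.ofReal_inv_of_pos hJt_pos,
      ENNReal.ofReal_toReal hJtop]
  ext s hs
  rw [Measure.map_apply hg_meas hs,
    (MeasurableEmbedding.subtype_coe isClosed_sphere.measurableSet).map_apply,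
    withDensity_apply _ (measurable_subtype_coe hs), key s hs]
  have hpt : ∀ u : sphere (0:E) 1, ENNReal.ofReal (c₀ * r u ^ (-(p:ℝ)))
      = ENNReal.ofReal (r u ^ (-(p:ℝ))) * I := by
    intro u
    rw [ENNReal.ofReal_mul hc₀_pos.le, hofReal_c₀, ← hI_eq, mul_comm]
  rw [lintegral_congr hpt, lintegral_mul_const _ hf_meas]

/-- If `x` has density `h(r(x))` with respect to Lebesgue measure on `ℝ^p`,
then the direction `u = x/‖x‖` has density `u ↦ c₀ r(u)^{−p}` with respect to the surface
measure `σ` on the unit sphere, where `c₀ = 1/∫_{S^{p-1}} r(v)^{−p} dσ(v)`: the pushforward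
under `x ↦ ‖x‖⁻¹ • x` of the measure with Lebesgue density `h ∘ r` equals the measure on the
sphere with density `c₀ r(·)^{−p}` with respect to `σ` (pushed to `ℝ^p` by the inclusion). -/
theorem direction_density {p : ℕ} (hp : 2 ≤ p)
    (r : EuclideanSpace ℝ (Fin p) → ℝ)
    (hr_cont : ContinuousOn r {x : EuclideanSpace ℝ (Fin p) | x ≠ 0})
    (hr_pos : ∀ x : EuclideanSpace ℝ (Fin p), x ≠ 0 → 0 < r x)
    (hr_equiv : ∀ c : ℝ, 0 < c → ∀ x : EuclideanSpace ℝ (Fin p), x ≠ 0 →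
      r (c • x) = c * r x)
    (h : ℝ → ℝ) (hh_meas : Measurable h) (hh_nonneg : ∀ s : ℝ, 0 < s → 0 ≤ h s)
    (hprob : IsProbabilityMeasure
      ((volume : Measure (EuclideanSpace ℝ (Fin p))).withDensity
        fun x => ENNReal.ofReal (h (r x))))
    (c₀ : ℝ)
    (hc₀ : c₀ = 1 / ∫ v : sphere (0 : EuclideanSpace ℝ (Fin p)) 1,
        r (v : EuclideanSpace ℝ (Fin p)) ^ (-(p : ℝ))
        ∂(volume : Measure (EuclideanSpace ℝ (Fin p))).toSphere) :
    Measure.map (fun x : EuclideanSpace ℝ (Fin p) => ‖x‖⁻¹ • x)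
        ((volume : Measure (EuclideanSpace ℝ (Fin p))).withDensity
          fun x => ENNReal.ofReal (h (r x)))
      = Measure.map (Subtype.val :
            sphere (0 : EuclideanSpace ℝ (Fin p)) 1 → EuclideanSpace ℝ (Fin p))
          (((volume : Measure (EuclideanSpace ℝ (Fin p))).toSphere).withDensity
            fun u => ENNReal.ofReal
              (c₀ * r (u : EuclideanSpace ℝ (Fin p)) ^ (-(p : ℝ)))) := by
  haveI : Nonempty (Fin p) := ⟨⟨0, by omega⟩⟩
  haveI : Nontrivial (EuclideanSpace ℝ (Fin p)) := inferInstance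
  exact direction_density_aux volume hp finrank_euclideanSpace_fin r hr_cont hr_pos hr_equiv
    h hh_meas hprob.measure_univ c₀ hc₀
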